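/- Let A be a family of compact metric spaces that is uniformly totally bounded: there is D < ∞ with diam(X) ≤ D for all X ∈ A, and for every ε > 0 there is N(ε) < ∞ such that every X ∈ A can be covered by N(ε) balls of radius ε. Suppose each X ∈ A carries a finite Borel measure μ_X with μ_X(X) ≤ M for a uniform constant M. Then the family {(X, μ_X) : X ∈ A} is precompact in the Gromov-Hausdorff-Prokhorov metric: every sequence has a subsequence converging to some compact measured metric space. -/

import Mathlib

open Metric Set MeasureTheory Filter
open scoped ENNReal

/-- The Gromov-Hausdorff-Prokhorov distance between compact measured metric spaces. -/
noncomputable def ghpDist (X Y : Type) [MetricSpace X] [CompactSpace X] [MeasurableSpace X]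
    [MetricSpace Y] [CompactSpace Y] [MeasurableSpace Y] (μ : Measure X) (ν : Measure Y) : ℝ :=
  sInf {r : ℝ | ∃ (Z : Type) (_ : MetricSpace Z) (_ : CompactSpace Z)
    (_ : MeasurableSpace Z) (_ : BorelSpace Z) (f : X → Z) (g : Y → Z),
    Isometry f ∧ Isometry g ∧ Measurable f ∧ Measurable g ∧
    max (hausdorffDist (range f) (range g))
      (levyProkhorovDist (μ.map f) (ν.map g)) = r}

open GromovHausdorff TopologicalSpace
open scoped NNReal Topology

lemma ghpDist_nonneg (X Y : Type) [MetricSpace X] [CompactSpace X] [MeasurableSpace X]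
    [MetricSpace Y] [CompactSpace Y] [MeasurableSpace Y] (μ : Measure X) (ν : Measure Y) :
    0 ≤ ghpDist X Y μ ν := by
  apply Real.sInf_nonneg
  rintro r ⟨Z, _, _, _, _, f, g, _, _, _, _, h⟩
  rw [← h]
  exact le_max_of_le_left hausdorffDist_nonneg


lemma thickening_preimage_subset {Y Z : Type*} [PseudoMetricSpace Y] [PseudoMetricSpace Z]
    {g : Y → Z} (hg : Isometry g) (δ : ℝ) (B : Set Z) :
    thickening δ (g ⁻¹' B) ⊆ g ⁻¹' (thickening δ B) := by
  intro x hx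
  rcases mem_thickening_iff.1 hx with ⟨z, hz, hd⟩
  exact mem_thickening_iff.2 ⟨g z, hz, by rwa [hg.dist_eq]⟩

lemma levyProkhorovEDist_map_le {Y Z : Type*} [MeasurableSpace Y] [PseudoMetricSpace Y]
    [MeasurableSpace Z] [PseudoMetricSpace Z] [OpensMeasurableSpace Z]
    {g : Y → Z} (hg : Isometry g) (hgm : Measurable g) (ν₁ ν₂ : Measure Y) :
    levyProkhorovEDist (ν₁.map g) (ν₂.map g) ≤ levyProkhorovEDist ν₁ ν₂ := by
  apply levyProkhorovEDist_le_of_forall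
  intro ε B hε hεtop hB
  have hthick : MeasurableSet (thickening ε.toReal B) := isOpen_thickening.measurableSet
  constructor
  · rw [Measure.map_apply hgm hB, Measure.map_apply hgm hthick]
    calc ν₁ (g ⁻¹' B) ≤ ν₂ (thickening ε.toReal (g ⁻¹' B)) + ε :=
          left_measure_le_of_levyProkhorovEDist_lt hε (hgm hB)
      _ ≤ ν₂ (g ⁻¹' thickening ε.toReal B) + ε :=
          add_le_add (measure_mono (thickening_preimage_subset hg _ _)) le_rfl
  · rw [Measure.map_apply hgm hB, Measure.map_apply hgm hthick]
    calc ν₂ (g ⁻¹' B) ≤ ν₁ (thickening ε.toReal (g ⁻¹' B)) + ε :=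
          right_measure_le_of_levyProkhorovEDist_lt hε (hgm hB)
      _ ≤ ν₁ (g ⁻¹' thickening ε.toReal B) + ε :=
          add_le_add (measure_mono (thickening_preimage_subset hg _ _)) le_rfl

noncomputable instance optCouplingMS (X Y : Type) [MetricSpace X] [CompactSpace X] [Nonempty X]
    [MetricSpace Y] [CompactSpace Y] [Nonempty Y] :
    MeasurableSpace (OptimalGHCoupling X Y) := borel _

instance optCouplingBorel (X Y : Type) [MetricSpace X] [CompactSpace X] [Nonempty X]
    [MetricSpace Y] [CompactSpace Y] [Nonempty Y] :
    BorelSpace (OptimalGHCoupling X Y) := ⟨rfl⟩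



lemma ghpDist_le_max (X Y : Type) [MetricSpace X] [CompactSpace X] [Nonempty X]
    [MeasurableSpace X] [BorelSpace X]
    [MetricSpace Y] [CompactSpace Y] [Nonempty Y] [MeasurableSpace Y] [BorelSpace Y]
    (μ : Measure X) (ν : Measure Y) :
    ghpDist X Y μ ν ≤ max (ghDist X Y)
      (levyProkhorovDist (μ.map (optimalGHInjl X Y)) (ν.map (optimalGHInjr X Y))) := by
  apply csInf_le
  · exact ⟨0, by
      rintro r ⟨Z, _, _, _, _, f, g, _, _, _, _, h⟩
      rw [← h]
      exact le_max_of_le_left hausdorffDist_nonneg⟩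
  · refine ⟨OptimalGHCoupling X Y, inferInstance, inferInstance, inferInstance, inferInstance,
      optimalGHInjl X Y, optimalGHInjr X Y, isometry_optimalGHInjl X Y, isometry_optimalGHInjr X Y,
      (isometry_optimalGHInjl X Y).continuous.measurable,
      (isometry_optimalGHInjr X Y).continuous.measurable, ?_⟩
    rw [hausdorffDist_optimal]


lemma exists_atomic_approx (X Y : Type) [MetricSpace X] [CompactSpace X] [Nonempty X]
    [MeasurableSpace X] [BorelSpace X]
    [MetricSpace Y] [CompactSpace Y] [Nonempty Y] [MeasurableSpace Y] [BorelSpace Y]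
    (μ : Measure X) (ε : ℝ) (hε : 0 < ε) (s : Finset X)
    (hs : ∀ x : X, ∃ y ∈ s, dist x y ≤ ε) :
    ∃ ϑ : Measure Y, ϑ univ ≤ μ univ ∧
      levyProkhorovEDist (μ.map (optimalGHInjl X Y)) (ϑ.map (optimalGHInjr X Y))
        ≤ ENNReal.ofReal (ghDist X Y + 2 * ε) := by
  classical
  set d : ℝ := ghDist X Y with hd_def
  have hd0 : 0 ≤ d := dist_nonneg
  set fl : X → OptimalGHCoupling X Y := optimalGHInjl X Y with hfl
  set fr : Y → OptimalGHCoupling X Y := optimalGHInjr X Y with hfr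
  have hIl : Isometry fl := isometry_optimalGHInjl X Y
  have hIr : Isometry fr := isometry_optimalGHInjr X Y
  have hlm : Measurable fl := hIl.continuous.measurable
  have hrm : Measurable fr := hIr.continuous.measurable
  have hHD : hausdorffDist (range fl) (range fr) = d := hausdorffDist_optimal
  -- the enumerated net
  set l : List X := s.toList with hl
  set m : ℕ := l.length with hm
  -- the Voronoi-type partition
  set ctr : Fin m → X := fun i => l.get i with hctr
  set C : Fin m → Set X := fun i =>
    closedBall (ctr i) ε \ ⋃ (j : Fin m) (_ : j < i), closedBall (ctr j) ε with hC
  have hCmeas : ∀ i, MeasurableSet (C i) := fun i =>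
    measurableSet_closedBall.diff
      (MeasurableSet.iUnion fun j => MeasurableSet.iUnion fun _ => measurableSet_closedBall)
  have hCdist : ∀ i, ∀ x ∈ C i, dist x (ctr i) ≤ ε := fun i x hx => mem_closedBall.1 hx.1
  have hCdisj : Pairwise (Function.onFun Disjoint C) := by
    intro i j hij
    rw [Function.onFun]
    rcases lt_or_gt_of_ne hij with h | h
    · rw [Set.disjoint_left]
      intro x hxi hxj
      exact hxj.2 (mem_iUnion₂.2 ⟨i, h, hxi.1⟩)
    · rw [Set.disjoint_right]
      intro x hxj hxi
      exact hxi.2 (mem_iUnion₂.2 ⟨j, h, hxj.1⟩)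
  have hCcover : (⋃ i, C i) = univ := by
    apply eq_univ_iff_forall.2
    intro x
    have : ∃ i : Fin m, x ∈ closedBall (ctr i) ε := by
      obtain ⟨y, hy, hxy⟩ := hs x
      have : y ∈ l := by
        rw [hl]; exact Finset.mem_toList.2 hy
      obtain ⟨n, hn⟩ := List.mem_iff_get.1 this
      refine ⟨n, mem_closedBall.2 ?_⟩
      show dist x (l.get n) ≤ ε
      rw [hn]; exact hxy
    set F : Finset (Fin m) := Finset.univ.filter (fun i => x ∈ closedBall (ctr i) ε) with hF
    have hFne : F.Nonempty := by
      obtain ⟨i, hi⟩ := this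
      exact ⟨i, by simp only [hF, Finset.mem_filter, Finset.mem_univ, true_and]; exact hi⟩
    set i₀ := F.min' hFne with hi₀
    have hi₀F : i₀ ∈ F := F.min'_mem hFne
    refine mem_iUnion.2 ⟨i₀, ⟨by simpa [hF] using hi₀F, ?_⟩⟩
    intro hx
    obtain ⟨j, hj, hjx⟩ := mem_iUnion₂.1 hx
    have : j ∈ F := by simp only [hF, Finset.mem_filter, Finset.mem_univ, true_and]; exact hjx
    exact absurd (F.min'_le j this) (not_le.2 hj)
  -- partition summation
  have hsum : ∀ A : Set X, MeasurableSet A → μ A = ∑ i : Fin m, μ (A ∩ C i) := by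
    intro A hA
    have hAeq : μ A = μ (⋃ i, A ∩ C i) := by
      rw [← Set.inter_iUnion, hCcover, Set.inter_univ]
    rw [hAeq, measure_iUnion ?_ (fun i => hA.inter (hCmeas i)), tsum_fintype]
    intro i j hij
    exact (hCdisj hij).mono Set.inter_subset_right Set.inter_subset_right
  -- choose atoms in Y
  have htop : EMetric.hausdorffEdist (range fl) (range fr) ≠ ⊤ :=
    Metric.hausdorffEdist_ne_top_of_nonempty_of_bounded (range_nonempty _) (range_nonempty _)
      (isCompact_range hIl.continuous).isBounded (isCompact_range hIr.continuous).isBounded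
  have hy : ∀ i : Fin m, ∃ y : Y, dist (fl (ctr i)) (fr y) < d + ε := by
    intro i
    have : hausdorffDist (range fl) (range fr) < d + ε := by
      rw [hHD]; linarith
    obtain ⟨z, hz, hzd⟩ := exists_dist_lt_of_hausdorffDist_lt (mem_range_self (ctr i)) this htop
    obtain ⟨y, rfl⟩ := hz
    exact ⟨y, hzd⟩
  choose y hy using hy
  -- the atomic measure
  set ϑ : Measure Y := ∑ i : Fin m, μ (C i) • Measure.dirac (y i) with hϑ
  have hϑ_apply : ∀ A : Set Y, MeasurableSet A →
      ϑ A = ∑ i : Fin m, μ (C i) * Set.indicator A 1 (y i) := by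
    intro A hA
    rw [hϑ, Measure.finset_sum_apply]
    congr 1
    ext i
    rw [Measure.smul_apply, Measure.dirac_apply' _ hA, smul_eq_mul]
  have key : ∀ (i : Fin m) (x : X), x ∈ C i → dist (fl x) (fr (y i)) < d + 2 * ε := by
    intro i x hx
    calc dist (fl x) (fr (y i)) ≤ dist (fl x) (fl (ctr i)) + dist (fl (ctr i)) (fr (y i)) :=
          dist_triangle _ _ _
      _ < ε + (d + ε) := by
          apply add_lt_add_of_le_of_lt
          · rw [hIl.dist_eq]; exact hCdist i x hx
          · exact hy i
      _ = d + 2 * ε := by ring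
  refine ⟨ϑ, ?_, ?_⟩
  · rw [hϑ_apply univ MeasurableSet.univ]
    simp only [Set.indicator_univ, Pi.one_apply, mul_one]
    rw [← tsum_fintype (L := SummationFilter.unconditional (Fin m)), ← measure_iUnion hCdisj hCmeas]
    exact measure_mono (subset_univ _)
  · apply levyProkhorovEDist_le_of_forall
    intro ε' B hε' hε'top hB
    have hrlt : d + 2 * ε < ε'.toReal := by
      rw [← ENNReal.ofReal_lt_iff_lt_toReal (by linarith) hε'top.ne] at *
      exact hε'
    set T := thickening ε'.toReal B with hT
    have hTmeas : MeasurableSet T := isOpen_thickening.measurableSet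
    constructor
    · -- μ.map fl B ≤ ϑ.map fr T + ε'
      rw [Measure.map_apply hlm hB, Measure.map_apply hrm hTmeas]
      have : μ (fl ⁻¹' B) ≤ ϑ (fr ⁻¹' T) := by
        rw [hsum _ (hlm hB), hϑ_apply _ (hrm hTmeas)]
        apply Finset.sum_le_sum
        intro i _
        by_cases hne : (fl ⁻¹' B ∩ C i).Nonempty
        · obtain ⟨x, hxB, hxC⟩ := hne
          have : y i ∈ fr ⁻¹' T := by
            rw [Set.mem_preimage, hT]
            apply mem_thickening_iff.2
            exact ⟨fl x, hxB, by rw [dist_comm]; exact (key i x hxC).trans_le hrlt.le⟩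
          rw [Set.indicator_of_mem this, Pi.one_apply, mul_one]
          exact measure_mono Set.inter_subset_right
        · rw [Set.not_nonempty_iff_eq_empty.1 hne]
          simp
      exact this.trans (le_add_right le_rfl)
    · -- ϑ.map fr B ≤ μ.map fl T + ε'
      rw [Measure.map_apply hrm hB, Measure.map_apply hlm hTmeas]
      have : ϑ (fr ⁻¹' B) ≤ μ (fl ⁻¹' T) := by
        rw [hϑ_apply _ (hrm hB), hsum _ (hlm hTmeas)]
        apply Finset.sum_le_sum
        intro i _
        by_cases hyB : y i ∈ fr ⁻¹' B
        · rw [Set.indicator_of_mem hyB, Pi.one_apply, mul_one]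
          have hsub : C i ⊆ fl ⁻¹' T ∩ C i := by
            intro x hx
            refine ⟨?_, hx⟩
            rw [Set.mem_preimage, hT]
            apply mem_thickening_iff.2
            exact ⟨fr (y i), hyB, (key i x hx).trans_le hrlt.le⟩
          exact measure_mono hsub
        · rw [Set.indicator_of_notMem hyB]
          simp
      exact this.trans (le_add_right le_rfl)


lemma exists_lp_limit (Y : Type) [MetricSpace Y] [CompactSpace Y] [Nonempty Y]
    [MeasurableSpace Y] [BorelSpace Y] (M : ℝ≥0∞) (hM : M < ⊤)
    (ϑ : ℕ → Measure Y) (hϑM : ∀ k, ϑ k univ ≤ M) :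
    ∃ ψ : ℕ → ℕ, StrictMono ψ ∧ ∃ ν : Measure Y, ν univ ≤ M ∧
      Tendsto (fun k => levyProkhorovEDist (ϑ (ψ k)) ν) atTop (𝓝 0) := by
  classical
  set c : ℕ → Y := TopologicalSpace.denseSeq Y with hc_def
  have hc : DenseRange c := TopologicalSpace.denseRange_denseSeq Y
  set V : Finset (ℕ × ℚ) → Set Y := fun S => ⋃ p ∈ S, ball (c p.1) (p.2 : ℝ) with hV
  have hVopen : ∀ S, IsOpen (V S) := fun S => isOpen_biUnion fun _ _ => isOpen_ball
  have hVunion : ∀ S T, V (S ∪ T) = V S ∪ V T := fun S T => Finset.set_biUnion_union S T _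
  -- basic covers from the countable basis
  have hbasis : ∀ K : Set Y, IsCompact K → ∀ U : Set Y, IsOpen U → K ⊆ U →
      ∃ S, K ⊆ V S ∧ V S ⊆ U := by
    intro K hK U hU hKU
    have hcov : K ⊆ ⋃ p ∈ {p : ℕ × ℚ | ball (c p.1) ((p.2 : ℝ)) ⊆ U}, ball (c p.1) ((p.2 : ℝ)) := by
      intro y hy
      obtain ⟨r, hr, hball⟩ := Metric.isOpen_iff.1 hU y (hKU hy)
      obtain ⟨q, hq0, hq2⟩ := exists_rat_btwn (by linarith : (0:ℝ) < r/2)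
      obtain ⟨j, hj⟩ := Metric.denseRange_iff.1 hc y q (by exact_mod_cast hq0)
      have hsub : ball (c j) ((q : ℝ)) ⊆ U := by
        intro z hz
        apply hball
        have h1 : dist z (c j) < q := mem_ball.1 hz
        have h2 : dist z y ≤ dist z (c j) + dist y (c j) := dist_triangle_right z y (c j)
        exact mem_ball.2 (by linarith)
      exact mem_biUnion (show ((j, q) : ℕ × ℚ) ∈ _ from hsub) (mem_ball.2 hj)
    obtain ⟨b', hb'sub, hb'fin, hb'cov⟩ := hK.elim_finite_subcover_image
      (fun p _ => isOpen_ball) hcov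
    refine ⟨hb'fin.toFinset, ?_, ?_⟩
    · intro y hy
      obtain ⟨p, hp, hyp⟩ := mem_iUnion₂.1 (hb'cov hy)
      rw [hV]
      exact mem_biUnion (hb'fin.mem_toFinset.2 hp) hyp
    · intro z hz
      rw [hV] at hz
      obtain ⟨p, hp, hzp⟩ := mem_iUnion₂.1 hz
      exact hb'sub (hb'fin.mem_toFinset.1 hp) hzp
  obtain ⟨S₀, hS₀, -⟩ := hbasis univ isCompact_univ univ isOpen_univ subset_rfl
  have hVS₀ : V S₀ = univ := eq_univ_of_univ_subset hS₀
  -- diagonal extraction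
  obtain ⟨α, -, ψ, hψ, hconv⟩ := isCompact_univ.tendsto_subseq
    (x := fun k => fun S => ϑ k (V S)) (fun k => mem_univ _)
  have hα : ∀ S, Tendsto (fun k => ϑ (ψ k) (V S)) atTop (𝓝 (α S)) := fun S =>
    tendsto_pi_nhds.1 hconv S
  have hαmono : ∀ S T, V S ⊆ V T → α S ≤ α T := fun S T h =>
    le_of_tendsto_of_tendsto' (hα S) (hα T) fun k => measure_mono h
  have hαM : ∀ S, α S ≤ M := fun S =>
    le_of_tendsto' (hα S) fun k => (measure_mono (subset_univ _)).trans (hϑM _)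
  have hαtop : ∀ S, α S ≠ ⊤ := fun S => ((hαM S).trans_lt hM).ne
  have hαadd : ∀ S T, α (S ∪ T) ≤ α S + α T := fun S T =>
    le_of_tendsto_of_tendsto' (hα (S ∪ T)) ((hα S).add (hα T)) fun k => by
      rw [hVunion]; exact measure_union_le _ _
  have hαsuper : ∀ S T W, Disjoint (V S) (V T) → V S ⊆ V W → V T ⊆ V W →
      α S + α T ≤ α W := fun S T W hd hSW hTW =>
    le_of_tendsto_of_tendsto' ((hα S).add (hα T)) (hα W) fun k => by
      rw [← measure_union hd (hVopen T).measurableSet]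
      exact measure_mono (union_subset hSW hTW)
  -- the limit content
  set lam : Compacts Y → ℝ≥0∞ := fun K => ⨅ (S) (_ : (K : Set Y) ⊆ V S), α S with hlam
  have hlam_le : ∀ (K : Compacts Y) S, (K : Set Y) ⊆ V S → lam K ≤ α S := fun K S hS =>
    iInf₂_le S hS
  have hlamM : ∀ K, lam K ≤ M := fun K =>
    (hlam_le K S₀ (by rw [hVS₀]; exact subset_univ _)).trans (hαM S₀)
  have hlamtop : ∀ K, lam K ≠ ⊤ := fun K => ((hlamM K).trans_lt hM).ne
  have hlam_mono : ∀ K₁ K₂ : Compacts Y, (K₁ : Set Y) ⊆ K₂ → lam K₁ ≤ lam K₂ := fun K₁ K₂ h =>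
    le_iInf₂ fun S hS => hlam_le K₁ S (h.trans hS)
  have hlam_alpha : ∀ (K : Compacts Y) S, V S ⊆ (K : Set Y) → α S ≤ lam K := fun K S h =>
    le_iInf₂ fun S' hS' => hαmono S S' (h.trans hS')
  have hlam_subadd : ∀ K₁ K₂ : Compacts Y, lam (K₁ ⊔ K₂) ≤ lam K₁ + lam K₂ := by
    intro K₁ K₂
    have heq : lam K₁ + lam K₂
        = ⨅ (S₁) (_ : (K₁ : Set Y) ⊆ V S₁) (S₂) (_ : (K₂ : Set Y) ⊆ V S₂), (α S₁ + α S₂) := by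
      simp only [hlam]
      simp_rw [ENNReal.iInf_add, ENNReal.add_iInf]
    rw [heq]
    refine le_iInf₂ fun S₁ h₁ => le_iInf₂ fun S₂ h₂ => ?_
    refine (hlam_le _ (S₁ ∪ S₂) ?_).trans (hαadd S₁ S₂)
    rw [Compacts.coe_sup, hVunion]
    exact union_subset_union h₁ h₂
  have hlam_superadd : ∀ K₁ K₂ : Compacts Y, Disjoint (K₁ : Set Y) K₂ →
      lam K₁ + lam K₂ ≤ lam (K₁ ⊔ K₂) := by
    intro K₁ K₂ hdisj
    obtain ⟨δ, hδ, hdisj'⟩ := hdisj.exists_thickenings K₁.isCompact K₂.isCompact.isClosed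
    refine le_iInf₂ fun S hS => ?_
    rw [Compacts.coe_sup] at hS
    obtain ⟨S₁, hS₁, hS₁'⟩ := hbasis K₁ K₁.isCompact (V S ∩ thickening δ K₁)
      ((hVopen S).inter isOpen_thickening)
      (subset_inter ((subset_union_left).trans hS) (self_subset_thickening hδ _))
    obtain ⟨S₂, hS₂, hS₂'⟩ := hbasis K₂ K₂.isCompact (V S ∩ thickening δ K₂)
      ((hVopen S).inter isOpen_thickening)
      (subset_inter ((subset_union_right).trans hS) (self_subset_thickening hδ _))
    have hd : Disjoint (V S₁) (V S₂) :=
      hdisj'.mono (hS₁'.trans inter_subset_right) (hS₂'.trans inter_subset_right)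
    exact (add_le_add (hlam_le K₁ S₁ hS₁) (hlam_le K₂ S₂ hS₂)).trans
      (hαsuper S₁ S₂ S hd (hS₁'.trans inter_subset_left) (hS₂'.trans inter_subset_left))
  set κ : Content Y :=
    { toFun := fun K => (lam K).toNNReal
      mono' := fun K₁ K₂ h => ENNReal.toNNReal_mono (hlamtop K₂) (hlam_mono K₁ K₂ h)
      sup_disjoint' := fun K₁ K₂ hd _ _ => by
        rw [← ENNReal.toNNReal_add (hlamtop K₁) (hlamtop K₂)]
        apply le_antisymm
        · exact ENNReal.toNNReal_mono (ENNReal.add_ne_top.2 ⟨hlamtop _, hlamtop _⟩)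
            (hlam_subadd K₁ K₂)
        · exact ENNReal.toNNReal_mono (hlamtop _) (hlam_superadd K₁ K₂ hd)
      sup_le' := fun K₁ K₂ => by
        rw [← ENNReal.toNNReal_add (hlamtop K₁) (hlamtop K₂)]
        exact ENNReal.toNNReal_mono (ENNReal.add_ne_top.2 ⟨hlamtop _, hlamtop _⟩)
          (hlam_subadd K₁ K₂) } with hκ
  have hκcoe : ∀ K : Compacts Y, (κ K : ℝ≥0∞) = lam K := fun K => by
    rw [hκ]; exact ENNReal.coe_toNNReal (hlamtop K)
  set ν : Measure Y := κ.measure with hν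
  have hν_open : ∀ S, ν (V S) ≤ α S := by
    intro S
    rw [hν, κ.measure_apply (hVopen S).measurableSet,
      κ.outerMeasure_of_isOpen (V S) (hVopen S)]
    simp only [Content.innerContent]
    refine iSup₂_le fun K hK => ?_
    exact (hκcoe K).le.trans (hlam_le K S hK)
  have hν_cpt : ∀ (K : Compacts Y) S, V S ⊆ (K : Set Y) → α S ≤ ν (K : Set Y) := by
    intro K S h
    refine (hlam_alpha K S h).trans ?_
    rw [hν, κ.measure_apply K.isCompact.isClosed.measurableSet]
    have h2 := κ.le_outerMeasure_compacts K
    rwa [hκcoe K] at h2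
  have hνuniv : ν univ ≤ M := by
    rw [← hVS₀]
    exact (hν_open S₀).trans (hαM S₀)
  -- main eventual bound
  have hmain : ∀ δ : ℝ, 0 < δ →
      ∀ᶠ k in atTop, levyProkhorovEDist (ϑ (ψ k)) ν ≤ ENNReal.ofReal δ := by
    intro δ hδ
    set ε : ℝ := δ / 6 with hε_def
    have hε : 0 < ε := by positivity
    have hcov : (univ : Set Y) ⊆ ⋃ j ∈ (univ : Set ℕ), ball (c j) ε := by
      intro y _
      obtain ⟨j, hj⟩ := Metric.denseRange_iff.1 hc y ε hε
      exact mem_biUnion (mem_univ j) (mem_ball.2 hj)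
    obtain ⟨J', hJ'sub, hJ'fin, hJ'cov⟩ := isCompact_univ.elim_finite_subcover_image
      (fun j _ => isOpen_ball) hcov
    set J : Finset ℕ := hJ'fin.toFinset with hJ
    have hJcov : ∀ y : Y, ∃ j ∈ J, dist y (c j) < ε := by
      intro y
      obtain ⟨j, hj, hyj⟩ := mem_iUnion₂.1 (hJ'cov (mem_univ y))
      exact ⟨j, hJ'fin.mem_toFinset.2 hj, mem_ball.1 hyj⟩
    obtain ⟨q, hq1, hq2⟩ := exists_rat_btwn (show ε < 2*ε by linarith)
    have hq0 : (0:ℝ) < q := hε.trans hq1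
    set SI : Finset ℕ → Finset (ℕ × ℚ) := fun I => I.image (fun j => (j, q)) with hSI
    have hVSI : ∀ I, V (SI I) = ⋃ j ∈ I, ball (c j) (q : ℝ) := by
      intro I
      simp only [hV, hSI]
      ext z
      simp only [mem_iUnion, Finset.mem_image, exists_prop]
      constructor
      · rintro ⟨p, ⟨j, hj, rfl⟩, hz⟩
        exact ⟨j, hj, hz⟩
      · rintro ⟨j, hj, hz⟩
        exact ⟨(j, q), ⟨j, hj, rfl⟩, hz⟩
    have hev : ∀ᶠ k in atTop, ∀ I ∈ J.powerset,
        ϑ (ψ k) (V (SI I)) ≤ α (SI I) + ENNReal.ofReal ε ∧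
        α (SI I) ≤ ϑ (ψ k) (V (SI I)) + ENNReal.ofReal ε := by
      rw [eventually_all_finset]
      intro I _
      have hmem : Icc (α (SI I) - ENNReal.ofReal ε) (α (SI I) + ENNReal.ofReal ε)
          ∈ 𝓝 (α (SI I)) :=
        ENNReal.Icc_mem_nhds (hαtop _) (by simp [ENNReal.ofReal_pos.2 hε, (ENNReal.ofReal_pos.2 hε).ne'])
      filter_upwards [hα (SI I) hmem] with k hk
      exact ⟨hk.2, tsub_le_iff_right.1 hk.1⟩
    filter_upwards [hev] with k hk
    apply levyProkhorovEDist_le_of_forall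
    intro ε' B hε' hε'top hB
    have hδε' : δ < ε'.toReal := by
      rw [← ENNReal.ofReal_lt_iff_lt_toReal hδ.le hε'top.ne]; exact hε'
    set I : Finset ℕ := J.filter (fun j => c j ∈ thickening ε B) with hI
    obtain ⟨h1, h2⟩ := hk I (Finset.mem_powerset.2 (Finset.filter_subset _ _))
    have hBsub : B ⊆ V (SI I) := by
      intro y hy
      obtain ⟨j, hjJ, hjy⟩ := hJcov y
      have hjI : j ∈ I := Finset.mem_filter.2
        ⟨hjJ, mem_thickening_iff.2 ⟨y, hy, by rwa [dist_comm]⟩⟩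
      rw [hVSI]
      exact mem_biUnion hjI (mem_ball.2 (hjy.trans hq1))
    have hVsub : V (SI I) ⊆ thickening ε'.toReal B := by
      intro z hz
      rw [hVSI] at hz
      obtain ⟨j, hjI, hjz⟩ := mem_iUnion₂.1 hz
      obtain ⟨-, hcj⟩ := Finset.mem_filter.1 hjI
      obtain ⟨b, hbB, hcb⟩ := mem_thickening_iff.1 hcj
      have h3 : dist z (c j) < q := mem_ball.1 hjz
      have h4 : dist z b ≤ dist z (c j) + dist (c j) b := dist_triangle _ _ _
      exact mem_thickening_iff.2 ⟨b, hbB, by rw [hε_def] at hq2; linarith⟩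
    set KB : Compacts Y := ⟨⋃ j ∈ I, closedBall (c j) (q : ℝ),
      I.finite_toSet.isCompact_biUnion (fun j _ => isCompact_closedBall _ _)⟩ with hKB
    have hVK : V (SI I) ⊆ (KB : Set Y) := by
      rw [hVSI]
      exact iUnion₂_mono fun j hj => ball_subset_closedBall
    have hKthick : (KB : Set Y) ⊆ thickening ε'.toReal B := by
      intro z hz
      obtain ⟨j, hjI, hjz⟩ := mem_iUnion₂.1 hz
      obtain ⟨-, hcj⟩ := Finset.mem_filter.1 hjI
      obtain ⟨b, hbB, hcb⟩ := mem_thickening_iff.1 hcj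
      have h3 : dist z (c j) ≤ q := mem_closedBall.1 hjz
      have h4 : dist z b ≤ dist z (c j) + dist (c j) b := dist_triangle _ _ _
      exact mem_thickening_iff.2 ⟨b, hbB, by rw [hε_def] at hq2; linarith⟩
    have hεδ : ENNReal.ofReal ε ≤ ε' :=
      (ENNReal.ofReal_le_ofReal (by rw [hε_def]; linarith)).trans hε'.le
    constructor
    · calc ϑ (ψ k) B ≤ ϑ (ψ k) (V (SI I)) := measure_mono hBsub
        _ ≤ α (SI I) + ENNReal.ofReal ε := h1
        _ ≤ ν (KB : Set Y) + ENNReal.ofReal ε := add_le_add (hν_cpt KB (SI I) hVK) le_rfl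
        _ ≤ ν (thickening ε'.toReal B) + ε' := add_le_add (measure_mono hKthick) hεδ
    · calc ν B ≤ ν (V (SI I)) := measure_mono hBsub
        _ ≤ α (SI I) := hν_open (SI I)
        _ ≤ ϑ (ψ k) (V (SI I)) + ENNReal.ofReal ε := h2
        _ ≤ ϑ (ψ k) (thickening ε'.toReal B) + ε' := add_le_add (measure_mono hVsub) hεδ
  refine ⟨ψ, hψ, ν, hνuniv, ?_⟩
  rw [ENNReal.tendsto_nhds_zero]
  intro ε hε
  rcases eq_or_ne ε ⊤ with rfl | hεtop
  · exact Eventually.of_forall fun k => le_top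
  · exact (hmain ε.toReal (ENNReal.toReal_pos hε.ne' hεtop)).mono fun k hk => by
      rwa [ENNReal.ofReal_toReal hεtop] at hk


lemma exists_gh_limit (W : ℕ → Type) [∀ n, MetricSpace (W n)] [∀ n, CompactSpace (W n)]
    [∀ n, Nonempty (W n)]
    (D : ℝ) (hD : ∀ n, diam (univ : Set (W n)) ≤ D)
    (hcov : ∀ ε : ℝ, 0 < ε → ∃ N : ℕ, ∀ n, ∃ s : Finset (W n),
      s.card ≤ N ∧ ∀ x : W n, ∃ y ∈ s, dist x y ≤ ε) :
    ∃ ψ : ℕ → ℕ, StrictMono ψ ∧ ∃ p : GHSpace,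
      Tendsto (fun k => dist (toGHSpace (W (ψ k))) p) atTop (𝓝 0) := by
  classical
  have hNf : ∀ m : ℕ, ∃ N : ℕ, ∀ n, ∃ s : Finset (W n),
      s.card ≤ N ∧ ∀ x : W n, ∃ y ∈ s, dist x y ≤ 1/(m+1) := fun m => hcov _ (by positivity)
  choose Nf hNf using hNf
  -- isometry between representatives and the spaces
  have hrep : ∀ n, Nonempty ((toGHSpace (W n)).Rep ≃ᵢ W n) := fun n =>
    toGHSpace_eq_toGHSpace_iff_isometryEquiv.1 (GHSpace.toGHSpace_rep (toGHSpace (W n)))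
  have htb : TotallyBounded (Set.range fun n => toGHSpace (W n)) := by
    apply GromovHausdorff.totallyBounded (C := D) (u := fun m => 2/(m+1)) (K := Nf)
    · have h2 : Tendsto (fun m : ℕ => 2 * (1/(m+1) : ℝ)) atTop (𝓝 (2 * 0)) :=
        tendsto_one_div_add_atTop_nhds_zero_nat.const_mul 2
      simpa [mul_one_div, div_eq_mul_inv] using h2
    · rintro p ⟨n, rfl⟩
      obtain ⟨e⟩ := hrep n
      calc diam (univ : Set (toGHSpace (W n)).Rep)
          = diam (e '' univ) := (e.isometry.diam_image univ).symm
        _ = diam (univ : Set (W n)) := by rw [image_univ, e.surjective.range_eq]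
        _ ≤ D := hD n
    · rintro p ⟨n, rfl⟩ m
      obtain ⟨e⟩ := hrep n
      obtain ⟨s, hcard, hnet⟩ := hNf m n
      refine ⟨e.symm '' ↑s, ?_, ?_⟩
      · calc Cardinal.mk (e.symm '' (↑s : Set (W n)) : Set _) ≤ Cardinal.mk (↑s : Set (W n)) :=
            Cardinal.mk_image_le
          _ = s.card := Cardinal.mk_coe_finset
          _ ≤ Nf m := by exact_mod_cast Nat.cast_le.2 hcard
      · intro z _
        obtain ⟨y, hy, hdy⟩ := hnet (e z)
        refine mem_biUnion (mem_image_of_mem _ hy) ?_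
        rw [mem_ball]
        have : dist z (e.symm y) = dist (e z) y := by
          rw [← e.symm.isometry.dist_eq]
          simp
        rw [this]
        have hpos : (0:ℝ) < 1/(m+1) := by positivity
        calc dist (e z) y ≤ 1/(m+1) := hdy
          _ < 2/(m+1) := by
            rw [div_lt_div_iff_of_pos_right (by positivity)]
            norm_num
  have hcpt : IsCompact (closure (Set.range fun n => toGHSpace (W n))) :=
    isCompact_iff_totallyBounded_isComplete.2 ⟨htb.closure, isClosed_closure.isComplete⟩
  obtain ⟨p, -, ψ, hψ, hlim⟩ := hcpt.tendsto_subseq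
    (x := fun n => toGHSpace (W n)) (fun n => subset_closure (mem_range_self n))
  exact ⟨ψ, hψ, p, tendsto_iff_dist_tendsto_zero.1 hlim⟩
lemma main_nonempty (W : ℕ → Type) [∀ n, MetricSpace (W n)] [∀ n, CompactSpace (W n)]
    [∀ n, Nonempty (W n)] [∀ n, MeasurableSpace (W n)] [∀ n, BorelSpace (W n)]
    (μ : ∀ n, Measure (W n))
    (D : ℝ) (hD : ∀ n, diam (univ : Set (W n)) ≤ D)
    (hcov : ∀ ε : ℝ, 0 < ε → ∃ N : ℕ, ∀ n, ∃ s : Finset (W n),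
      s.card ≤ N ∧ ∀ x : W n, ∃ y ∈ s, dist x y ≤ ε)
    (M : ℝ≥0∞) (hM : M < ⊤) (hmass : ∀ n, μ n univ ≤ M) :
    ∃ (φ : ℕ → ℕ), StrictMono φ ∧
      ∃ (Y : Type) (iY : MetricSpace Y) (iYc : CompactSpace Y)
        (iYm : MeasurableSpace Y)
        (_ : @BorelSpace Y iY.toPseudoMetricSpace.toUniformSpace.toTopologicalSpace iYm)
        (ν : @Measure Y iYm), @IsFiniteMeasure Y iYm ν ∧
        Tendsto (fun k => ghpDist (W (φ k)) Y (μ (φ k)) ν) atTop (𝓝 0) := by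
  obtain ⟨ψ₁, hψ₁, p, hgh⟩ := exists_gh_limit W D hD hcov
  set Y := p.Rep with hY
  letI : MeasurableSpace Y := borel Y
  haveI : BorelSpace Y := ⟨rfl⟩
  have htg : toGHSpace Y = p := GHSpace.toGHSpace_rep p
  have hghY : ∀ k, ghDist (W (ψ₁ k)) Y = dist (toGHSpace (W (ψ₁ k))) p := by
    intro k
    rw [ghDist, htg]
  have hex : ∀ k, ∃ ϑ : Measure Y, ϑ univ ≤ μ (ψ₁ k) univ ∧
      levyProkhorovEDist ((μ (ψ₁ k)).map (optimalGHInjl (W (ψ₁ k)) Y))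
        (ϑ.map (optimalGHInjr (W (ψ₁ k)) Y))
        ≤ ENNReal.ofReal (ghDist (W (ψ₁ k)) Y + 2 * (1/(k+1))) := by
    intro k
    obtain ⟨N, hN⟩ := hcov (1/(k+1)) (by positivity)
    obtain ⟨s, -, hs⟩ := hN (ψ₁ k)
    exact exists_atomic_approx (W (ψ₁ k)) Y (μ (ψ₁ k)) (1/(k+1)) (by positivity) s hs
  choose ϑ hϑ1 hϑ2 using hex
  obtain ⟨ψ₂, hψ₂, ν, hνM, hνlim⟩ := exists_lp_limit Y M hM ϑ (fun k => (hϑ1 k).trans (hmass _))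
  haveI : IsFiniteMeasure ν := ⟨hνM.trans_lt hM⟩
  haveI : ∀ n, IsFiniteMeasure (μ n) := fun n => ⟨(hmass n).trans_lt hM⟩
  refine ⟨ψ₁ ∘ ψ₂, hψ₁.comp hψ₂, Y, inferInstance, inferInstance, inferInstance, inferInstance,
    ν, inferInstance, ?_⟩
  -- the Gromov-Hausdorff part
  set A : ℕ → ℝ := fun k => ghDist (W (ψ₁ (ψ₂ k))) Y with hA
  have hAlim : Tendsto A atTop (𝓝 0) := by
    have h := hgh.comp hψ₂.tendsto_atTop
    have : A = fun k => dist (toGHSpace (W (ψ₁ (ψ₂ k)))) p := by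
      funext k
      exact hghY (ψ₂ k)
    rw [this]
    exact h
  -- the Lévy-Prokhorov part
  set E : ℕ → ℝ≥0∞ := fun k =>
    levyProkhorovEDist ((μ (ψ₁ (ψ₂ k))).map (optimalGHInjl (W (ψ₁ (ψ₂ k))) Y))
      (ν.map (optimalGHInjr (W (ψ₁ (ψ₂ k))) Y)) with hE
  have hElim : Tendsto E atTop (𝓝 0) := by
    have hle : ∀ k, E k ≤ ENNReal.ofReal (A k + 2 * (1/(ψ₂ k+1)))
        + levyProkhorovEDist (ϑ (ψ₂ k)) ν := by
      intro k
      calc E k ≤ levyProkhorovEDist ((μ (ψ₁ (ψ₂ k))).map (optimalGHInjl (W (ψ₁ (ψ₂ k))) Y))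
            ((ϑ (ψ₂ k)).map (optimalGHInjr (W (ψ₁ (ψ₂ k))) Y))
          + levyProkhorovEDist ((ϑ (ψ₂ k)).map (optimalGHInjr (W (ψ₁ (ψ₂ k))) Y))
            (ν.map (optimalGHInjr (W (ψ₁ (ψ₂ k))) Y)) := levyProkhorovEDist_triangle _ _ _
        _ ≤ ENNReal.ofReal (A k + 2 * (1/(ψ₂ k+1))) + levyProkhorovEDist (ϑ (ψ₂ k)) ν :=
          add_le_add (hϑ2 (ψ₂ k))
            (levyProkhorovEDist_map_le (isometry_optimalGHInjr _ _)
              ((isometry_optimalGHInjr _ _).continuous.measurable) _ _)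
    have h2 : Tendsto (fun k : ℕ => (1/(ψ₂ k+1) : ℝ)) atTop (𝓝 0) := by
      have := (tendsto_one_div_add_atTop_nhds_zero_nat (𝕜 := ℝ)).comp hψ₂.tendsto_atTop
      simpa [Function.comp_def] using this
    have h1 : Tendsto (fun k => A k + 2*(1/(ψ₂ k+1) : ℝ)) atTop (𝓝 0) := by
      have := hAlim.add (h2.const_mul 2)
      simpa using this
    have h1' : Tendsto (fun k => ENNReal.ofReal (A k + 2*(1/(ψ₂ k+1)))) atTop (𝓝 0) := by
      have := (ENNReal.continuous_ofReal.tendsto 0).comp h1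
      simpa [Function.comp_def] using this
    have hb : Tendsto (fun k => ENNReal.ofReal (A k + 2 * (1/(ψ₂ k+1)))
        + levyProkhorovEDist (ϑ (ψ₂ k)) ν) atTop (𝓝 0) := by
      have := h1'.add hνlim
      simpa using this
    exact tendsto_of_tendsto_of_tendsto_of_le_of_le tendsto_const_nhds hb
      (fun k => zero_le) hle
  have hBlim : Tendsto (fun k => (E k).toReal) atTop (𝓝 0) := by
    have := (ENNReal.tendsto_toReal (by simp : (0:ℝ≥0∞) ≠ ⊤)).comp hElim
    simpa [Function.comp_def] using this
  -- squeeze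
  apply squeeze_zero (fun k => ghpDist_nonneg _ _ _ _)
    (g := fun k => max (A k) ((E k).toReal)) (fun k => ghpDist_le_max _ _ _ _)
  have := hAlim.max hBlim
  simpa using this
/-- A uniformly totally bounded family of compact metric spaces carrying finite measures of
uniformly bounded total mass is precompact in the Gromov-Hausdorff-Prokhorov metric: every
sequence has a subsequence converging to some compact measured metric space. -/
theorem stmt_16 (X : ℕ → Type)
    (inst : ∀ n, MetricSpace (X n)) (instC : ∀ n, CompactSpace (X n))
    (instM : ∀ n, MeasurableSpace (X n)) (instB : ∀ n, @BorelSpace (X n) _ (instM n))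
    (μ : ∀ n, @Measure (X n) (instM n))
    (D : ℝ) (hD : ∀ n, @Metric.diam (X n) (inst n).toPseudoMetricSpace (Set.univ) ≤ D)
    (hcov : ∀ ε : ℝ, 0 < ε → ∃ N : ℕ, ∀ n, ∃ s : Finset (X n),
      s.card ≤ N ∧ ∀ x : X n, ∃ y ∈ s, @dist (X n) (inst n).toDist x y ≤ ε)
    (M : ℝ≥0∞) (hM : M < ⊤) (hmass : ∀ n, μ n Set.univ ≤ M) :
    ∃ (φ : ℕ → ℕ), StrictMono φ ∧
      ∃ (Y : Type) (iY : MetricSpace Y) (iYc : CompactSpace Y)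
        (iYm : MeasurableSpace Y) (_ : @BorelSpace Y iY.toPseudoMetricSpace.toUniformSpace.toTopologicalSpace iYm)
        (ν : @Measure Y iYm), @IsFiniteMeasure Y iYm ν ∧
        Tendsto (fun k =>
          @ghpDist (X (φ k)) Y (inst (φ k)) (instC (φ k)) (instM (φ k)) iY iYc iYm (μ (φ k)) ν)
          atTop (nhds 0) := by
  letI := inst
  letI := instC
  letI := instM
  letI := instB
  by_cases hfreq : ∃ᶠ n in atTop, IsEmpty (X n)
  · -- infinitely many empty spaces: converge to the point with zero measure
    obtain ⟨φ, hφ, hemp⟩ := Filter.extraction_of_frequently_atTop hfreq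
    letI : MeasurableSpace PUnit := borel PUnit
    haveI : BorelSpace PUnit := ⟨rfl⟩
    refine ⟨φ, hφ, PUnit, inferInstance, inferInstance, inferInstance, inferInstance, 0,
      inferInstance, ?_⟩
    have hzero : ∀ k,
        @ghpDist (X (φ k)) PUnit (inst (φ k)) (instC (φ k)) (instM (φ k)) _ _
          _ (μ (φ k)) 0 = 0 := by
      intro k
      haveI := hemp k
      apply le_antisymm
      · apply csInf_le
        · exact ⟨0, by
            rintro r ⟨Z, _, _, _, _, f, g, _, _, _, _, h⟩
            rw [← h]
            exact le_max_of_le_left hausdorffDist_nonneg⟩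
        · refine ⟨PUnit, inferInstance, inferInstance, inferInstance, inferInstance,
            fun x => (hemp k).elim x, id, fun x => (hemp k).elim x, isometry_id,
            measurable_of_empty _, measurable_id, ?_⟩
          rw [Measure.eq_zero_of_isEmpty (μ (φ k)), Measure.map_zero, Measure.map_zero,
            range_eq_empty]
          rw [hausdorffDist_comm, hausdorffDist_empty, levyProkhorovDist_self]
          simp
      · exact ghpDist_nonneg _ _ _ _
    have : (fun k =>
        @ghpDist (X (φ k)) PUnit (inst (φ k)) (instC (φ k)) (instM (φ k)) _ _
          _ (μ (φ k)) 0) = fun _ => (0:ℝ) := funext hzero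
    rw [this]
    exact tendsto_const_nhds
  · -- eventually nonempty
    rw [Filter.not_frequently] at hfreq
    obtain ⟨n₀, hn₀⟩ := eventually_atTop.1 hfreq
    haveI hne : ∀ k : ℕ, Nonempty (X (n₀ + k)) := fun k =>
      not_isEmpty_iff.1 (hn₀ _ (Nat.le_add_right _ _))
    obtain ⟨φ', hφ', Y, iY, iYc, iYm, iYb, ν, hν, hten⟩ :=
      main_nonempty (fun k => X (n₀ + k)) (fun k => μ (n₀ + k)) D (fun k => hD _)
        (fun ε hε => by
          obtain ⟨N, hN⟩ := hcov ε hε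
          exact ⟨N, fun k => hN (n₀ + k)⟩)
        M hM (fun k => hmass _)
    exact ⟨fun k => n₀ + φ' k, fun a b h => Nat.add_lt_add_left (hφ' h) n₀,
      Y, iY, iYc, iYm, iYb, ν, hν, hten⟩
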